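/- Let f : V → W be a morphism of N-modules such that V is presented in degrees ≤ m and W is presented in degrees ≤ n with respect to the sup norm. Then the kernel and the cokernel of f, computed in the functor category N ⥤ ModuleCat k, are each presented in degrees ≤ N' for some finite N'. Consequently, the full subcategory of N-modules presented in finite sup-norm degrees is an abelian subcategory of the category of all N-modules. -/

import Mathlib

open CategoryTheory CategoryTheory.Limits

/-- The poset `ℕ →₀ ℕ` of finitely supported sequences of naturals, with pointwise order,
regarded as a thin category. -/
abbrev NPoset := ℕ →₀ ℕ

/-- The sup norm of `x : ℕ →₀ ℕ` is `max_i x i`. -/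
noncomputable def supNorm (x : NPoset) : ℕ := x.support.sup x

/-- `P x` is the `k`-linearization of the representable functor `N(x, -)`. -/
noncomputable def Pmod (k : Type) [CommRing k] (x : NPoset) : NPoset ⥤ ModuleCat k :=
  coyoneda.obj (Opposite.op x) ⋙ ModuleCat.free k

/-- `Q` is a (possibly infinite) direct sum of modules `P y` with `y ∈ S`. -/
def IsDirectSumOfP (k : Type) [CommRing k] (Q : NPoset ⥤ ModuleCat k) (S : Set NPoset) : Prop :=
  ∃ (ι : Type) (g : ι → NPoset) (_ : ∀ j, g j ∈ S)
    (incl : ∀ j, Pmod k (g j) ⟶ Q), Nonempty (IsColimit (Cofan.mk Q incl))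

/-- `V` is presented in degrees `≤ n` w.r.t. a norm: there is an exact sequence
`P¹ → P⁰ → V → 0` with `P⁰`, `P¹` direct sums of modules `P y` of norm `≤ n`. -/
def PresentedInDeg {k : Type} [CommRing k] (norm : NPoset → ℕ)
    (V : NPoset ⥤ ModuleCat k) (n : ℕ) : Prop :=
  ∃ (P1 P0 : NPoset ⥤ ModuleCat k) (d : P1 ⟶ P0) (p : P0 ⟶ V),
    IsDirectSumOfP k P1 {y | norm y ≤ n} ∧ IsDirectSumOfP k P0 {y | norm y ≤ n} ∧
    (∀ z : NPoset, Function.Surjective (p.app z)) ∧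
    (∀ z : NPoset, Function.Exact (d.app z) (p.app z))

namespace Stmt5

lemma supNorm_le_iff {x : NPoset} {a : ℕ} : supNorm x ≤ a ↔ ∀ t, x t ≤ a := by
  constructor
  · intro h t
    by_cases ht : t ∈ x.support
    · exact le_trans (Finset.le_sup (f := ⇑x) ht) h
    · simp [Finsupp.notMem_support_iff.1 ht]
  · intro h
    exact Finset.sup_le fun t _ => h t

lemma finsetSup_apply {α : Type*} (s : Finset α) (g : α → NPoset) (t : ℕ) :
    (s.sup g) t = s.sup fun i => g i t := by
  classical
  induction s using Finset.cons_induction with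
  | empty => simp [Finsupp.bot_eq_zero]
  | cons a s ha ih => simp [Finsupp.sup_apply, ih]

section DS

variable {k : Type} [CommRing k] {ι : Type}

lemma DS_le (g : ι → NPoset) {w w' : NPoset} (h : w ≤ w') :
    Finsupp.supported k k {i | g i ≤ w} ≤ Finsupp.supported k k {i | g i ≤ w'} :=
  Finsupp.supported_mono (fun i (hi : g i ≤ w) => le_trans hi h)

/-- Concrete direct sum of the `Pmod k (g i)`. -/
noncomputable def DS (k : Type) [CommRing k] {ι : Type} (g : ι → NPoset) :
    NPoset ⥤ ModuleCat k where
  obj w := ModuleCat.of k (Finsupp.supported k k {i | g i ≤ w})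
  map {w w'} h := ModuleCat.ofHom (Submodule.inclusion (DS_le g (leOfHom h)))
  map_id _ := rfl
  map_comp _ _ := rfl

example (g : ι → NPoset) (w : NPoset) (x : (DS k g).obj w) :
    Finsupp.supported k k {i | g i ≤ w} := x

lemma DS_map_injective {g : ι → NPoset} {w w'} (h : w ⟶ w') :
    Function.Injective ((DS k g).map h) :=
  Submodule.inclusion_injective (DS_le g (leOfHom h))

/-- The basis element of `DS k g` at index `j`. -/
noncomputable def bas (g : ι → NPoset) (j : ι) : (DS k g).obj (g j) :=
  (⟨Finsupp.single j 1, Finsupp.single_mem_supported k 1 (le_refl (g j))⟩ :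
    Finsupp.supported k k {i | g i ≤ g j})

/-- A single-supported element at any bigger degree. -/
noncomputable def basAt (g : ι → NPoset) (j : ι) {w : NPoset} (h : g j ≤ w) (c : k) :
    (DS k g).obj w :=
  (⟨Finsupp.single j c, Finsupp.single_mem_supported k c h⟩ :
    Finsupp.supported k k {i | g i ≤ w})

/-- Underlying finsupp of an element of `DS k g`. -/
def DSc {g : ι → NPoset} {w : NPoset} (x : (DS k g).obj w) : ι →₀ k :=
  (x : Finsupp.supported k k {i | g i ≤ w}).1

lemma DSc_mem {g : ι → NPoset} {w : NPoset} (x : (DS k g).obj w) {i : ι}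
    (hi : i ∈ (DSc x).support) : g i ≤ w :=
  (x : Finsupp.supported k k {i | g i ≤ w}).2 hi

lemma DS_ext {g : ι → NPoset} {w : NPoset} {x y : (DS k g).obj w}
    (h : DSc x = DSc y) : x = y := Subtype.ext h

lemma DSc_map {g : ι → NPoset} {w w' : NPoset} (h : w ⟶ w') (x : (DS k g).obj w) :
    DSc ((DS k g).map h x) = DSc x := rfl

lemma DSc_basAt {g : ι → NPoset} {j : ι} {w : NPoset} (h : g j ≤ w) (c : k) :
    DSc (basAt g j h c) = Finsupp.single j c := rfl

lemma DSc_smul {g : ι → NPoset} {w : NPoset} (c : k) (x : (DS k g).obj w) :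
    DSc (c • x) = c • DSc x := rfl

lemma DSc_add {g : ι → NPoset} {w : NPoset} (x y : (DS k g).obj w) :
    DSc (x + y) = DSc x + DSc y := rfl


end DS


section Ext

variable {k : Type} [CommRing k] {ι : Type}

/-- Linear maps out of a `supported` module are determined by single-supported elements. -/
lemma supported_lhom_ext {S : Set ι} {N : Type} [AddCommGroup N] [Module k N]
    (a b : (Finsupp.supported k k S) →ₗ[k] N)
    (h : ∀ (i : ι) (hi : i ∈ S) (c : k),
      a ⟨Finsupp.single i c, Finsupp.single_mem_supported k c hi⟩ =
      b ⟨Finsupp.single i c, Finsupp.single_mem_supported k c hi⟩) : a = b := by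
  classical
  have key : a ∘ₗ (Finsupp.restrictDom k k S) = b ∘ₗ (Finsupp.restrictDom k k S) := by
    apply Finsupp.lhom_ext
    intro i c
    by_cases hi : i ∈ S
    · have : (Finsupp.restrictDom k k S) (Finsupp.single i c) =
        ⟨Finsupp.single i c, Finsupp.single_mem_supported k c hi⟩ := by
        apply Subtype.ext
        show Finsupp.filter (· ∈ S) (Finsupp.single i c) = _
        rw [Finsupp.filter_single_of_pos _ hi]
      simp only [LinearMap.comp_apply, this]
      exact h i hi c
    · have : (Finsupp.restrictDom k k S) (Finsupp.single i c) = 0 := by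
        apply Subtype.ext
        show Finsupp.filter (· ∈ S) (Finsupp.single i c) = _
        rw [Finsupp.filter_single_of_neg _ hi]
        rfl
      simp only [LinearMap.comp_apply, this, map_zero]
  apply LinearMap.ext
  intro x
  have hx : (Finsupp.restrictDom k k S) (x : ι →₀ k) = x :=
    LinearMap.congr_fun (Finsupp.restrictDom_comp_subtype (M := k) (R := k) S) x
  calc a x = a ((Finsupp.restrictDom k k S) (x : ι →₀ k)) := by rw [hx]
    _ = b ((Finsupp.restrictDom k k S) (x : ι →₀ k)) := LinearMap.congr_fun key _
    _ = b x := by rw [hx]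

end Ext


section PmodLemmas

variable {k : Type} [CommRing k]

lemma Pmod_map_single {x w w' : NPoset} (ψ : w ⟶ w') (φ : x ⟶ w) (c : k) :
    ((Pmod k x).map ψ) (Finsupp.single φ c) = Finsupp.single (φ ≫ ψ) c := by
  show Finsupp.mapDomain (fun θ => θ ≫ ψ) (Finsupp.single φ c) = _
  rw [Finsupp.mapDomain_single]

/-- The morphism `Pmod k y ⟶ X` corresponding to an element `v : X.obj y`. -/
noncomputable def elementHom (X : NPoset ⥤ ModuleCat k) (y : NPoset) (v : X.obj y) :
    Pmod k y ⟶ X where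
  app w := ModuleCat.ofHom (Finsupp.lsum k (fun (φ : y ⟶ w) => LinearMap.toSpanSingleton k (X.obj w) (X.map φ v)))
  naturality {w w'} ψ := by
    apply ModuleCat.hom_ext
    apply Finsupp.lhom_ext
    intro φ c
    show (Finsupp.lsum k _) ((Pmod k y).map ψ (Finsupp.single φ c)) =
      X.map ψ ((Finsupp.lsum k _) (Finsupp.single φ c))
    rw [Pmod_map_single]
    simp only [Finsupp.lsum_single, LinearMap.toSpanSingleton_apply]
    rw [X.map_comp]
    show c • (X.map ψ) ((X.map φ) v) = (X.map ψ) (c • (X.map φ) v)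
    rw [map_smul]

lemma elementHom_app_single {X : NPoset ⥤ ModuleCat k} {y w : NPoset} (v : X.obj y)
    (φ : y ⟶ w) (c : k) :
    (elementHom X y v).app w (Finsupp.single φ c) = c • X.map φ v := by
  show (Finsupp.lsum k (fun (φ : y ⟶ w) => LinearMap.toSpanSingleton k (X.obj w) (X.map φ v)))
    (Finsupp.single φ c) = _
  simp [Finsupp.lsum_single]

lemma Pmod_hom_ext {y : NPoset} {X : NPoset ⥤ ModuleCat k} {a b : Pmod k y ⟶ X}
    (h : a.app y (Finsupp.single (𝟙 y) 1) = b.app y (Finsupp.single (𝟙 y) 1)) : a = b := by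
  apply NatTrans.ext
  funext w
  apply ModuleCat.hom_ext
  apply Finsupp.lhom_ext
  intro φ c
  have hsingle : ((Pmod k y).map φ) (Finsupp.single (𝟙 y) c) = Finsupp.single φ c := by
    rw [Pmod_map_single, Category.id_comp]
  have hc : (Finsupp.single (𝟙 y) c : (Pmod k y).obj y) =
      HSMul.hSMul (α := k) (β := (Pmod k y).obj y) c (Finsupp.single (𝟙 y) (1:k)) := by
    show (Finsupp.single (𝟙 y) c : (y ⟶ y) →₀ k) = c • Finsupp.single (𝟙 y) (1:k)
    rw [Finsupp.smul_single, smul_eq_mul, mul_one]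
  have key : ∀ (t : Pmod k y ⟶ X),
      t.app w (Finsupp.single φ c) = c • X.map φ (t.app y (Finsupp.single (𝟙 y) 1)) := by
    intro t
    have na := ConcreteCategory.congr_hom (t.naturality φ) (Finsupp.single (𝟙 y) c)
    have na' : t.app w (((Pmod k y).map φ) (Finsupp.single (𝟙 y) c)) =
        X.map φ (t.app y (Finsupp.single (𝟙 y) c)) := na
    rw [hsingle] at na'
    rw [na', hc]
    exact (congrArg (X.map φ) (map_smul (t.app y).hom c _)).trans (map_smul (X.map φ).hom c _)
  show a.app w (Finsupp.single φ c) = b.app w (Finsupp.single φ c)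
  rw [key a, key b, h]

end PmodLemmas


section Desc

variable {k : Type} [CommRing k] {ι : Type}

/-- Morphism out of `DS k g` determined by elements `x j : X.obj (g j)`. -/
noncomputable def DSdesc {g : ι → NPoset} (X : NPoset ⥤ ModuleCat k)
    (x : ∀ j, X.obj (g j)) : DS k g ⟶ X where
  app w := ModuleCat.ofHom ((Finsupp.lsum k (fun i =>
      if h : g i ≤ w then LinearMap.toSpanSingleton k (X.obj w) (X.map (homOfLE h) (x i))
      else 0)) ∘ₗ (Submodule.subtype (Finsupp.supported k k {i | g i ≤ w})))
  naturality {w w'} ψ := by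
    apply ModuleCat.hom_ext
    apply supported_lhom_ext
    intro i hi c
    have hi' : g i ≤ w' := le_trans hi (leOfHom ψ)
    show (Finsupp.lsum k _) ((Finsupp.single i c : ι →₀ k)) =
      X.map ψ ((Finsupp.lsum k _) ((Finsupp.single i c : ι →₀ k)))
    rw [Finsupp.lsum_single, Finsupp.lsum_single, dif_pos hi', dif_pos (show g i ≤ w from hi)]
    show c • X.map (homOfLE hi') (x i) = X.map ψ (c • X.map (homOfLE hi) (x i))
    rw [map_smul]
    congr 1
    have hcomp : X.map (homOfLE hi') = X.map (homOfLE (show g i ≤ w from hi)) ≫ X.map ψ := by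
      rw [← X.map_comp]
      congr 1
    rw [hcomp]
    rfl

lemma DSdesc_app_single {g : ι → NPoset} {X : NPoset ⥤ ModuleCat k} (x : ∀ j, X.obj (g j))
    {w : NPoset} (j : ι) (hj : g j ≤ w) (c : k) :
    (DSdesc X x).app w (basAt g j hj c) = c • X.map (homOfLE hj) (x j) := by
  show (Finsupp.lsum k (fun i =>
      if h : g i ≤ w then LinearMap.toSpanSingleton k (X.obj w) (X.map (homOfLE h) (x i))
      else 0)) ((Finsupp.single j c : ι →₀ k)) = _
  rw [Finsupp.lsum_single, dif_pos hj]
  rfl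

lemma homOfLE_refl_eq_id (w : NPoset) (h : w ≤ w) : homOfLE h = 𝟙 w := rfl

lemma DSdesc_basis {g : ι → NPoset} {X : NPoset ⥤ ModuleCat k} (x : ∀ j, X.obj (g j)) (j : ι) :
    (DSdesc X x).app (g j) (bas g j) = x j := by
  have : bas (k := k) g j = basAt (k := k) g j (le_refl (g j)) (1 : k) := rfl
  rw [this, DSdesc_app_single, homOfLE_refl_eq_id, X.map_id]
  show (1:k) • (x j) = x j
  rw [one_smul]

/-- Morphisms out of `DS k g` are determined by their values on basis elements. -/
lemma DS_hom_ext {g : ι → NPoset} {X : NPoset ⥤ ModuleCat k} {a b : DS k g ⟶ X}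
    (h : ∀ j, a.app (g j) (bas g j) = b.app (g j) (bas g j)) : a = b := by
  apply NatTrans.ext
  funext w
  apply ModuleCat.hom_ext
  apply supported_lhom_ext
  intro i hi c
  have key : ∀ (t : DS k g ⟶ X),
      t.app w (basAt g i hi c) = c • X.map (homOfLE hi) (t.app (g i) (bas g i)) := by
    intro t
    have hb : (DS k g).map (homOfLE hi) (basAt g i (le_refl (g i)) c) = basAt g i hi c := by
      apply DS_ext; rfl
    have na := ConcreteCategory.congr_hom (t.naturality (homOfLE hi)) (basAt g i (le_refl (g i)) c)
    have na' : t.app w ((DS k g).map (homOfLE hi) (basAt g i (le_refl (g i)) c)) =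
        X.map (homOfLE hi) (t.app (g i) (basAt g i (le_refl (g i)) c)) := na
    rw [hb] at na'
    have hsm : basAt g i (le_refl (g i)) c = c • bas g i := by
      apply DS_ext
      show Finsupp.single i c = c • Finsupp.single i (1:k)
      rw [Finsupp.smul_single, smul_eq_mul, mul_one]
    rw [na', hsm, map_smul, map_smul]
  show a.app w (basAt g i hi c) = b.app w (basAt g i hi c)
  rw [key a, key b, h i]

/-- The inclusion of `Pmod k (g j)` into `DS k g`. -/
noncomputable def inclP (g : ι → NPoset) (j : ι) : Pmod k (g j) ⟶ DS k g :=
  elementHom (DS k g) (g j) (bas g j)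

lemma inclP_app_basis (g : ι → NPoset) (j : ι) :
    (inclP (k := k) g j).app (g j) (Finsupp.single (𝟙 (g j)) (1 : k)) = bas g j := by
  rw [inclP, elementHom_app_single, CategoryTheory.Functor.map_id]
  show (1:k) • (bas g j) = bas g j
  rw [one_smul]

/-- The cofan of `DS k g` is a colimit. -/
noncomputable def DSisColimit (g : ι → NPoset) :
    IsColimit (Cofan.mk (DS k g) (inclP (k := k) g)) := by
  refine mkCofanColimit _
    (fun s => DSdesc s.pt (fun j => (s.inj j).app (g j) (Finsupp.single (𝟙 (g j)) 1)))
    (fun s j => ?_) (fun s m hm => ?_)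
  · apply Pmod_hom_ext
    show (DSdesc s.pt _).app (g j) ((inclP g j).app (g j) (Finsupp.single (𝟙 (g j)) 1)) = _
    rw [inclP_app_basis, DSdesc_basis]
  · apply DS_hom_ext
    intro j
    have h2 : inclP g j ≫ m = s.inj j := hm j
    show m.app (g j) (bas g j) =
      (DSdesc s.pt fun j => ((s.inj j).app (g j)) (Finsupp.single (𝟙 (g j)) (1:k))).app (g j) (bas g j)
    rw [DSdesc_basis, ← h2]
    show m.app (g j) (bas g j) =
      m.app (g j) ((inclP g j).app (g j) (Finsupp.single (𝟙 (g j)) (1:k)))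
    rw [inclP_app_basis]

lemma DS_isDirectSum (g : ι → NPoset) (S : Set NPoset) (hg : ∀ j, g j ∈ S) :
    IsDirectSumOfP k (DS k g) S :=
  ⟨ι, g, hg, inclP g, ⟨DSisColimit g⟩⟩

end Desc


section Descend

variable {k : Type} [CommRing k] {ι : Type}

lemma comp_app_elem {A B C : NPoset ⥤ ModuleCat k} (a : A ⟶ B) (b : B ⟶ C) (z : NPoset)
    (x : A.obj z) : (a ≫ b).app z x = b.app z (a.app z x) := rfl

lemma congr_app_elem {A B : NPoset ⥤ ModuleCat k} {a b : A ⟶ B} (h : a = b) (z : NPoset)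
    (x : A.obj z) : a.app z x = b.app z x := by rw [h]

lemma exact_comp_zero {A B C : NPoset ⥤ ModuleCat k} (d : A ⟶ B) (p : B ⟶ C)
    (h : ∀ z, Function.Exact (d.app z) (p.app z)) : d ≫ p = 0 := by
  apply NatTrans.ext
  funext z
  apply ModuleCat.hom_ext
  apply LinearMap.ext
  intro x
  exact (h z).apply_apply_eq_zero x

/-- Key combinatorial lemma: an element of the kernel of a map out of a bounded direct sum
descends to a degree of bounded sup norm. -/
lemma DS_descend {M : ℕ} {g : ι → NPoset} (hg : ∀ i, supNorm (g i) ≤ M)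
    {X : NPoset ⥤ ModuleCat k}
    (hX : ∀ {w w' : NPoset} (h : w ⟶ w'), Function.Injective (X.map h))
    (ψ : DS k g ⟶ X) (z : NPoset) (c : (DS k g).obj z) (hc : ψ.app z c = 0) :
    ∃ (y : NPoset) (hy : y ≤ z), supNorm y ≤ M ∧
      ∃ c₀ : (DS k g).obj y, ψ.app y c₀ = 0 ∧ (DS k g).map (homOfLE hy) c₀ = c := by
  classical
  set s : ι →₀ k := DSc c with hs
  set y : NPoset := s.support.sup g with hy0
  have hy : y ≤ z := Finset.sup_le (fun i hi => DSc_mem c hi)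
  have hnorm : supNorm y ≤ M := by
    rw [supNorm_le_iff]
    intro t
    rw [hy0, finsetSup_apply]
    exact Finset.sup_le (fun i _ => supNorm_le_iff.mp (hg i) t)
  have hmem : s ∈ Finsupp.supported k k {i | g i ≤ y} := by
    rw [Finsupp.mem_supported]
    intro i hi
    exact Finset.le_sup (f := g) hi
  set c₀ : (DS k g).obj y := (⟨s, hmem⟩ : Finsupp.supported k k {i | g i ≤ y}) with hc₀
  have hmap : (DS k g).map (homOfLE hy) c₀ = c := by
    apply DS_ext
    rfl
  refine ⟨y, hy, hnorm, c₀, ?_, hmap⟩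
  apply hX (homOfLE hy)
  have na := ConcreteCategory.congr_hom (ψ.naturality (homOfLE hy)) c₀
  have na' : ψ.app z ((DS k g).map (homOfLE hy) c₀) = X.map (homOfLE hy) (ψ.app y c₀) := na
  rw [hmap, hc] at na'
  rw [← na', map_zero]

end Descend


section Main

variable {k : Type} [CommRing k]

lemma PSI {V W : NPoset ⥤ ModuleCat k}
    {ιa : Type} {a0 : ιa → NPoset}
    (pV : DS k a0 ⟶ V)
    {ιb1 ιb0 : Type} {b1 : ιb1 → NPoset} {b0 : ιb0 → NPoset}
    (dW : DS k b1 ⟶ DS k b0) (pW : DS k b0 ⟶ W)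
    (hpW : ∀ z, Function.Surjective (pW.app z))
    (hWex : ∀ z, Function.Exact (dW.app z) (pW.app z))
    (f : V ⟶ W) :
    ∃ (ψ : DS k (Sum.elim a0 b1) ⟶ DS k b0) (π' : DS k (Sum.elim a0 b1) ⟶ DS k a0),
      ψ ≫ pW = π' ≫ (pV ≫ f) ∧
      ∀ (z : NPoset) (x : (DS k b0).obj z) (x' : (DS k a0).obj z),
        pW.app z x = f.app z (pV.app z x') →
        ∃ c : (DS k (Sum.elim a0 b1)).obj z, ψ.app z c = x ∧ π'.app z c = x' := by
  classical
  -- lift `pV ≫ f` through `pW`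
  have hu : ∀ j : ιa, ∃ u : (DS k b0).obj (a0 j),
      pW.app (a0 j) u = (pV ≫ f).app (a0 j) (bas a0 j) :=
    fun j => hpW (a0 j) _
  choose u hu' using hu
  set h : DS k a0 ⟶ DS k b0 := DSdesc (DS k b0) u with hdefh
  have hhpW : h ≫ pW = pV ≫ f := by
    apply DS_hom_ext
    intro j
    rw [comp_app_elem, hdefh, DSdesc_basis]
    exact hu' j
  -- the combined map and the projection
  set gc := Sum.elim a0 b1 with hgc
  set ψ : DS k gc ⟶ DS k b0 := DSdesc (DS k b0)
    (fun t => Sum.rec (fun j => h.app (a0 j) (bas a0 j)) (fun j => dW.app (b1 j) (bas b1 j)) t)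
    with hdefψ
  set π' : DS k gc ⟶ DS k a0 := DSdesc (DS k a0)
    (fun t => Sum.rec (fun j => bas a0 j) (fun _ => 0) t) with hdefπ
  set ι₁ : DS k a0 ⟶ DS k gc := DSdesc (DS k gc) (fun j => bas gc (Sum.inl j)) with hdefι₁
  set ι₂ : DS k b1 ⟶ DS k gc := DSdesc (DS k gc) (fun j => bas gc (Sum.inr j)) with hdefι₂
  have hι₁ : ∀ j, ι₁.app (a0 j) (bas a0 j) = bas gc (Sum.inl j) := fun j =>
    DSdesc_basis (g := a0) (X := DS k gc) _ j
  have hι₂ : ∀ j, ι₂.app (b1 j) (bas b1 j) = bas gc (Sum.inr j) := fun j =>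
    DSdesc_basis (g := b1) (X := DS k gc) _ j
  have E1 : ι₁ ≫ ψ = h := by
    apply DS_hom_ext
    intro j
    rw [comp_app_elem, hι₁]
    exact DSdesc_basis (g := gc) (X := DS k b0) _ (Sum.inl j)
  have E2 : ι₂ ≫ ψ = dW := by
    apply DS_hom_ext
    intro j
    rw [comp_app_elem, hι₂]
    exact DSdesc_basis (g := gc) (X := DS k b0) _ (Sum.inr j)
  have E3 : ι₁ ≫ π' = 𝟙 (DS k a0) := by
    apply DS_hom_ext
    intro j
    rw [comp_app_elem, hι₁]
    exact DSdesc_basis (g := gc) (X := DS k a0) _ (Sum.inl j)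
  have E4 : ι₂ ≫ π' = 0 := by
    apply DS_hom_ext
    intro j
    rw [comp_app_elem, hι₂]
    exact DSdesc_basis (g := gc) (X := DS k a0) _ (Sum.inr j)
  have hdWpW : dW ≫ pW = 0 := exact_comp_zero _ _ hWex
  refine ⟨ψ, π', ?_, ?_⟩
  · -- ψ ≫ pW = π' ≫ (pV ≫ f)
    apply DS_hom_ext
    rintro (j | j)
    · rw [comp_app_elem, comp_app_elem, hdefψ, hdefπ]
      rw [show (DSdesc (DS k b0) _).app (gc (Sum.inl j)) (bas gc (Sum.inl j)) =
          h.app (a0 j) (bas a0 j) from DSdesc_basis _ (Sum.inl j)]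
      rw [show (DSdesc (DS k a0) _).app (gc (Sum.inl j)) (bas gc (Sum.inl j)) =
          bas a0 j from DSdesc_basis _ (Sum.inl j)]
      exact congr_app_elem hhpW (a0 j) (bas a0 j)
    · rw [comp_app_elem, comp_app_elem, hdefψ, hdefπ]
      rw [show (DSdesc (DS k b0) _).app (gc (Sum.inr j)) (bas gc (Sum.inr j)) =
          dW.app (b1 j) (bas b1 j) from DSdesc_basis _ (Sum.inr j)]
      rw [show (DSdesc (DS k a0) _).app (gc (Sum.inr j)) (bas gc (Sum.inr j)) =
          (0 : (DS k a0).obj (gc (Sum.inr j))) from DSdesc_basis _ (Sum.inr j)]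
      rw [map_zero]
      have h0 : pW.app (b1 j) (dW.app (b1 j) (bas b1 j)) = 0 := by
        have := congr_app_elem hdWpW (b1 j) (bas b1 j)
        rw [comp_app_elem] at this
        exact this
      exact h0
  · intro z x x' heq
    set r : (DS k b0).obj z := x - h.app z x' with hr
    have hrk : pW.app z r = 0 := by
      rw [hr, map_sub]
      have : pW.app z (h.app z x') = f.app z (pV.app z x') := by
        have := congr_app_elem hhpW z x'
        rw [comp_app_elem, comp_app_elem] at this
        exact this
      rw [this, heq, sub_self]
    obtain ⟨uu, huu⟩ := (hWex z r).mp hrk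
    refine ⟨ι₁.app z x' + ι₂.app z uu, ?_, ?_⟩
    · rw [map_add]
      have e1 : ψ.app z (ι₁.app z x') = h.app z x' := by
        have := congr_app_elem E1 z x'
        rw [comp_app_elem] at this
        exact this
      have e2 : ψ.app z (ι₂.app z uu) = dW.app z uu := by
        have := congr_app_elem E2 z uu
        rw [comp_app_elem] at this
        exact this
      rw [e1, e2, huu, hr]
      abel
    · rw [map_add]
      have e3 : π'.app z (ι₁.app z x') = x' := by
        have := congr_app_elem E3 z x'
        rw [comp_app_elem] at this
        exact this
      have e4 : π'.app z (ι₂.app z uu) = 0 := by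
        have := congr_app_elem E4 z uu
        rw [comp_app_elem] at this
        exact this
      rw [e3, e4, add_zero]

end Main


section Cover

variable {k : Type} [CommRing k]

set_option maxHeartbeats 2000000 in
/-- The kernel of `f : V ⟶ W` admits a cover by a direct sum in degrees `≤ M`,
given a generating cover of `V` in degrees `≤ M` and a presentation of `W` in degrees `≤ M`. -/
lemma coverKer {V W : NPoset ⥤ ModuleCat k} {M : ℕ}
    {ιa : Type} {a0 : ιa → NPoset} (ha : ∀ j, supNorm (a0 j) ≤ M)
    (pV : DS k a0 ⟶ V) (hpV : ∀ z, Function.Surjective (pV.app z))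
    {ιb1 ιb0 : Type} {b1 : ιb1 → NPoset} {b0 : ιb0 → NPoset}
    (hb1 : ∀ j, supNorm (b1 j) ≤ M)
    (dW : DS k b1 ⟶ DS k b0) (pW : DS k b0 ⟶ W)
    (hpW : ∀ z, Function.Surjective (pW.app z))
    (hWex : ∀ z, Function.Exact (dW.app z) (pW.app z))
    (f : V ⟶ W) :
    ∃ (ικ : Type) (gκ : ικ → NPoset) (_ : ∀ t, supNorm (gκ t) ≤ M) (q : DS k gκ ⟶ V),
      ∀ z, Function.Exact (q.app z) (f.app z) := by
  classical
  obtain ⟨ψ, π', hE5, hP2⟩ := PSI pV dW pW hpW hWex f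
  have hgcle : ∀ t, supNorm (Sum.elim a0 b1 t) ≤ M := by
    rintro (j | j)
    · exact ha j
    · exact hb1 j
  refine ⟨(Σ' (y : NPoset) (_ : supNorm y ≤ M) (c : (DS k (Sum.elim a0 b1)).obj y),
      ψ.app y c = 0), fun t => t.1, fun t => t.2.1,
    DSdesc V (fun t => (π' ≫ pV).app t.1 t.2.2.1), ?_⟩
  set q := DSdesc V (fun (t : Σ' (y : NPoset) (_ : supNorm y ≤ M)
      (c : (DS k (Sum.elim a0 b1)).obj y), ψ.app y c = 0) => (π' ≫ pV).app t.1 t.2.2.1)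
    with hdefq
  have hqf : q ≫ f = 0 := by
    apply DS_hom_ext
    intro t
    rw [comp_app_elem, hdefq, DSdesc_basis]
    obtain ⟨y, hyn, c, hc⟩ := t
    show f.app y ((π' ≫ pV).app y c) = _
    have h1 : f.app y ((π' ≫ pV).app y c) = ((π' ≫ (pV ≫ f)).app y) c := rfl
    rw [h1, ← hE5, comp_app_elem, hc, map_zero]
    rfl
  intro z v
  constructor
  · intro hv
    obtain ⟨x', hx'⟩ := hpV z v
    have h0 : pW.app z 0 = f.app z (pV.app z x') := by
      rw [map_zero, hx', hv]
    obtain ⟨c, hcψ, hcπ⟩ := hP2 z 0 x' h0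
    obtain ⟨y, hy, hnorm, c₀, hc₀, hmapc⟩ :=
      DS_descend hgcle (fun {w w'} h => DS_map_injective h) ψ z c hcψ
    refine ⟨basAt (k := k) (fun (t : Σ' (y : NPoset) (_ : supNorm y ≤ M)
      (c : (DS k (Sum.elim a0 b1)).obj y), ψ.app y c = 0) => t.1)
      ⟨y, hnorm, c₀, hc₀⟩ (show y ≤ z from hy) (1 : k), ?_⟩
    rw [hdefq, DSdesc_app_single, one_smul]
    have na := ConcreteCategory.congr_hom ((π' ≫ pV).naturality (homOfLE hy)) c₀
    have na' : (π' ≫ pV).app z ((DS k (Sum.elim a0 b1)).map (homOfLE hy) c₀) =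
        V.map (homOfLE hy) ((π' ≫ pV).app y c₀) := na
    rw [← na', hmapc, comp_app_elem, hcπ, hx']
  · rintro ⟨s, rfl⟩
    have hz := congr_app_elem hqf z s
    rw [comp_app_elem] at hz
    rw [hz]
    rfl

end Cover


section Transport

variable {k : Type} [CommRing k]

lemma iso_app_hom_inv {A B : NPoset ⥤ ModuleCat k} (e : A ≅ B) (z : NPoset) (x : A.obj z) :
    e.inv.app z (e.hom.app z x) = x := by
  have h := congr_app_elem e.hom_inv_id z x
  rw [comp_app_elem] at h
  exact h

lemma iso_app_inv_hom {A B : NPoset ⥤ ModuleCat k} (e : A ≅ B) (z : NPoset) (x : B.obj z) :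
    e.hom.app z (e.inv.app z x) = x := by
  have h := congr_app_elem e.inv_hom_id z x
  rw [comp_app_elem] at h
  exact h

lemma iso_inv_app_surjective {A B : NPoset ⥤ ModuleCat k} (e : A ≅ B) (z : NPoset) :
    Function.Surjective (e.inv.app z) :=
  fun x => ⟨e.hom.app z x, iso_app_hom_inv e z x⟩

/-- Replace an abstract direct sum by the concrete model `DS`. -/
lemma exists_DS_iso {Q : NPoset ⥤ ModuleCat k} {S : Set NPoset}
    (h : IsDirectSumOfP k Q S) :
    ∃ (ι : Type) (g : ι → NPoset) (_ : ∀ j, g j ∈ S), Nonempty (Q ≅ DS k g) := by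
  obtain ⟨ι, g, hg, incl, ⟨hc⟩⟩ := h
  exact ⟨ι, g, hg, ⟨hc.coconePointUniqueUpToIso (DSisColimit g)⟩⟩

/-- Conjugating an exact pair by isomorphisms. -/
lemma exact_conj {A1 A0 B1 B0 : NPoset ⥤ ModuleCat k} {V : NPoset ⥤ ModuleCat k}
    (d : A1 ⟶ A0) (p : A0 ⟶ V) (e1 : A1 ≅ B1) (e0 : A0 ≅ B0)
    (hex : ∀ z, Function.Exact (d.app z) (p.app z)) :
    ∀ z, Function.Exact (((e1.inv ≫ d ≫ e0.hom).app z)) (((e0.inv ≫ p).app z)) := by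
  intro z y
  rw [comp_app_elem]
  rw [hex z (e0.inv.app z y)]
  constructor
  · rintro ⟨a, ha⟩
    refine ⟨e1.hom.app z a, ?_⟩
    rw [comp_app_elem, comp_app_elem, iso_app_hom_inv, ha, iso_app_inv_hom]
  · rintro ⟨a, ha⟩
    refine ⟨e1.inv.app z a, ?_⟩
    rw [← ha, comp_app_elem, comp_app_elem, iso_app_hom_inv]

lemma surj_conj {A0 B0 V : NPoset ⥤ ModuleCat k} (p : A0 ⟶ V) (e0 : A0 ≅ B0)
    (hp : ∀ z, Function.Surjective (p.app z)) :
    ∀ z, Function.Surjective ((e0.inv ≫ p).app z) := by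
  intro z v
  obtain ⟨x, hx⟩ := hp z v
  exact ⟨e0.hom.app z x, by rw [comp_app_elem, iso_app_hom_inv, hx]⟩

end Transport

section KernelCokernel

variable {k : Type} [CommRing k] {V W : NPoset ⥤ ModuleCat k}

lemma kernel_ι_app_injective (f : V ⟶ W) (z : NPoset) :
    Function.Injective ((kernel.ι f).app z) := by
  have h := kernelComparison_comp_ι f ((evaluation NPoset (ModuleCat k)).obj z)
  have h1 : Function.Injective (kernel.ι (f.app z)) :=
    (ModuleCat.mono_iff_injective _).1 inferInstance
  have h2 : Function.Bijective (kernelComparison f ((evaluation NPoset (ModuleCat k)).obj z)) :=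
    ConcreteCategory.bijective_of_isIso
      (kernelComparison f ((evaluation NPoset (ModuleCat k)).obj z))
  show Function.Injective
    (((evaluation NPoset (ModuleCat k)).obj z).map (kernel.ι f))
  rw [← h]
  intro x y hxy
  exact h2.injective (h1 hxy)

lemma kernel_ι_app_range (f : V ⟶ W) (z : NPoset) (v : V.obj z) (hv : f.app z v = 0) :
    ∃ t, (kernel.ι f).app z t = v := by
  have h := kernelComparison_comp_ι f ((evaluation NPoset (ModuleCat k)).obj z)
  set G := (evaluation NPoset (ModuleCat k)).obj z with hG
  -- v lies in the range of kernel.ι (f.app z)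
  have hmem : v ∈ LinearMap.ker (f.app z).hom := by
    rw [LinearMap.mem_ker]; exact hv
  set x0 := (ModuleCat.kernelIsoKer (f.app z)).inv ⟨v, hmem⟩ with hx0
  have hι : kernel.ι (f.app z) x0 = v := by
    exact ConcreteCategory.congr_hom (ModuleCat.kernelIsoKer_inv_kernel_ι (f.app z)) ⟨v, hmem⟩
  refine ⟨inv (kernelComparison f G) x0, ?_⟩
  have hcomp : (kernel.ι f).app z (inv (kernelComparison f G) x0) =
      kernel.ι (f.app z) (kernelComparison f G (inv (kernelComparison f G) x0)) := by
    exact (ConcreteCategory.congr_hom h (inv (kernelComparison f G) x0)).symm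
  rw [hcomp]
  have hinv : kernelComparison f G (inv (kernelComparison f G) x0) = x0 := by
    exact ConcreteCategory.congr_hom (IsIso.inv_hom_id (kernelComparison f G)) x0
  rw [hinv, hι]

lemma cokernel_π_app_surjective (f : V ⟶ W) (z : NPoset) :
    Function.Surjective ((cokernel.π f).app z) := by
  have h := π_comp_cokernelComparison f ((evaluation NPoset (ModuleCat k)).obj z)
  have h1 : Function.Surjective (cokernel.π (f.app z)) :=
    (ModuleCat.epi_iff_surjective _).1 inferInstance
  have h2 : Function.Bijective (cokernelComparison f ((evaluation NPoset (ModuleCat k)).obj z)) :=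
    ConcreteCategory.bijective_of_isIso
      (cokernelComparison f ((evaluation NPoset (ModuleCat k)).obj z))
  show Function.Surjective
    (((evaluation NPoset (ModuleCat k)).obj z).map (cokernel.π f))
  rw [← h]
  intro y
  obtain ⟨x0, hx0⟩ := h2.surjective y
  obtain ⟨x, hx⟩ := h1 x0
  refine ⟨x, ?_⟩
  show cokernelComparison f ((evaluation NPoset (ModuleCat k)).obj z) (cokernel.π (f.app z) x) = y
  rw [hx, hx0]

lemma cokernel_π_app_zero_iff (f : V ⟶ W) (z : NPoset) (x : W.obj z) :
    (cokernel.π f).app z x = 0 ↔ x ∈ Set.range (f.app z) := by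
  have h := π_comp_cokernelComparison f ((evaluation NPoset (ModuleCat k)).obj z)
  set G := (evaluation NPoset (ModuleCat k)).obj z with hG
  have h2 : Function.Bijective (cokernelComparison f G) :=
    ConcreteCategory.bijective_of_isIso (cokernelComparison f G)
  have happ : (cokernel.π f).app z x =
      cokernelComparison f G (cokernel.π (f.app z) x) := by
    exact (ConcreteCategory.congr_hom h x).symm
  have hzero : (cokernel.π f).app z x = 0 ↔ cokernel.π (f.app z) x = 0 := by
    rw [happ]
    constructor
    · intro hh
      apply h2.injective
      rw [hh, map_zero]
    · intro hh
      rw [hh, map_zero]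
  rw [hzero]
  -- now in ModuleCat
  have hiso := ModuleCat.cokernel_π_cokernelIsoRangeQuotient_hom (f.app z)
  have h3 : Function.Bijective ((ModuleCat.cokernelIsoRangeQuotient (f.app z)).hom) :=
    ConcreteCategory.bijective_of_isIso ((ModuleCat.cokernelIsoRangeQuotient (f.app z)).hom)
  have happ2 : (ModuleCat.cokernelIsoRangeQuotient (f.app z)).hom (cokernel.π (f.app z) x) =
      (LinearMap.range (f.app z).hom).mkQ x := by
    exact ConcreteCategory.congr_hom hiso x
  constructor
  · intro hh
    have : (LinearMap.range (f.app z).hom).mkQ x = 0 := by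
      rw [← happ2, hh, map_zero]
    rw [Submodule.mkQ_apply] at this
    rw [Submodule.Quotient.mk_eq_zero] at this
    obtain ⟨a, ha⟩ := this
    exact ⟨a, ha⟩
  · rintro ⟨a, rfl⟩
    apply h3.injective
    rw [happ2, map_zero]
    rw [Submodule.mkQ_apply, Submodule.Quotient.mk_eq_zero]
    exact ⟨a, rfl⟩

end KernelCokernel

end Stmt5

open Stmt5

set_option maxHeartbeats 2000000

/-- If `f : V ⟶ W` is a morphism of `N`-modules with `V` presented in degrees `≤ m` and `W`
presented in degrees `≤ n` (sup norm), then the kernel and the cokernel of `f`, computed in the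
functor category, are each presented in finite degrees. -/
theorem stmt5 {k : Type} [CommRing k] (V W : NPoset ⥤ ModuleCat k) (m n : ℕ)
    (hV : PresentedInDeg supNorm V m) (hW : PresentedInDeg supNorm W n) (f : V ⟶ W) :
    ∃ N' : ℕ, PresentedInDeg supNorm (kernel f) N' ∧ PresentedInDeg supNorm (cokernel f) N' := by
  classical
  obtain ⟨P1V, P0V, dV0, pV0, hs1V, hs0V, hpV0, hexV0⟩ := hV
  obtain ⟨P1W, P0W, dW0, pW0, hs1W, hs0W, hpW0, hexW0⟩ := hW
  obtain ⟨ι1V, g1V, hg1V, ⟨e1V⟩⟩ := exists_DS_iso hs1V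
  obtain ⟨ι0V, g0V, hg0V, ⟨e0V⟩⟩ := exists_DS_iso hs0V
  obtain ⟨ι1W, g1W, hg1W, ⟨e1W⟩⟩ := exists_DS_iso hs1W
  obtain ⟨ι0W, g0W, hg0W, ⟨e0W⟩⟩ := exists_DS_iso hs0W
  -- transported presentations
  have hpV : ∀ z, Function.Surjective ((e0V.inv ≫ pV0).app z) := surj_conj pV0 e0V hpV0
  have hexV : ∀ z, Function.Exact ((e1V.inv ≫ dV0 ≫ e0V.hom).app z) ((e0V.inv ≫ pV0).app z) :=
    exact_conj dV0 pV0 e1V e0V hexV0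
  have hpW : ∀ z, Function.Surjective ((e0W.inv ≫ pW0).app z) := surj_conj pW0 e0W hpW0
  have hexW : ∀ z, Function.Exact ((e1W.inv ≫ dW0 ≫ e0W.hom).app z) ((e0W.inv ≫ pW0).app z) :=
    exact_conj dW0 pW0 e1W e0W hexW0
  set pV : DS k g0V ⟶ V := e0V.inv ≫ pV0 with hdefpV
  set dV : DS k g1V ⟶ DS k g0V := e1V.inv ≫ dV0 ≫ e0V.hom with hdefdV
  set pW : DS k g0W ⟶ W := e0W.inv ≫ pW0 with hdefpW
  set dW : DS k g1W ⟶ DS k g0W := e1W.inv ≫ dW0 ≫ e0W.hom with hdefdW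
  -- norm bounds
  have hn0V : ∀ j, supNorm (g0V j) ≤ max m n := fun j => le_trans (hg0V j) (le_max_left m n)
  have hn1V : ∀ j, supNorm (g1V j) ≤ max m n := fun j => le_trans (hg1V j) (le_max_left m n)
  have hn0W : ∀ j, supNorm (g0W j) ≤ max m n := fun j => le_trans (hg0W j) (le_max_right m n)
  have hn1W : ∀ j, supNorm (g1W j) ≤ max m n := fun j => le_trans (hg1W j) (le_max_right m n)
  refine ⟨max m n, ?_, ?_⟩
  · -- KERNEL
    obtain ⟨ικ, gκ, hκ, q, hq⟩ := coverKer (M := max m n) hn0V pV hpV hn1W dW pW hpW hexW f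
    have hid : ∀ z : NPoset, Function.Surjective ((𝟙 (DS k gκ) : DS k gκ ⟶ DS k gκ).app z) := by
      intro z x
      exact ⟨x, rfl⟩
    obtain ⟨ικ2, gκ2, hκ2, q2, hq2⟩ :=
      coverKer (M := max m n) hκ (𝟙 (DS k gκ)) hid hn1V dV pV hpV hexV q
    have hqf0 : q ≫ f = 0 := exact_comp_zero q f hq
    have hpι : kernel.lift f q hqf0 ≫ kernel.ι f = q := kernel.lift_ι f q hqf0
    have hpsurj : ∀ z, Function.Surjective ((kernel.lift f q hqf0).app z) := by
      intro z t
      have hv : f.app z ((kernel.ι f).app z t) = 0 := by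
        have h1 := congr_app_elem (kernel.condition f) z t
        rw [comp_app_elem] at h1
        rw [h1]
        rfl
      obtain ⟨s, hs⟩ := (hq z _).mp hv
      refine ⟨s, ?_⟩
      apply kernel_ι_app_injective f z
      rw [← hs]
      have h2 := congr_app_elem hpι z s
      rw [comp_app_elem] at h2
      exact h2
    have hexK : ∀ z, Function.Exact (q2.app z) ((kernel.lift f q hqf0).app z) := by
      intro z x
      have hiff : (kernel.lift f q hqf0).app z x = 0 ↔ q.app z x = 0 := by
        have h2 := congr_app_elem hpι z x
        rw [comp_app_elem] at h2
        constructor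
        · intro hh
          rw [← h2, hh, map_zero]
        · intro hh
          apply kernel_ι_app_injective f z
          rw [h2, hh, map_zero]
      exact hiff.trans (hq2 z x)
    exact ⟨DS k gκ2, DS k gκ, q2, kernel.lift f q hqf0,
      DS_isDirectSum gκ2 _ (fun t => hκ2 t), DS_isDirectSum gκ _ (fun t => hκ t),
      hpsurj, hexK⟩
  · -- COKERNEL
    obtain ⟨ψ, π', hE5, hP2⟩ := PSI pV dW pW hpW hexW f
    have hcsurj : ∀ z, Function.Surjective ((pW ≫ cokernel.π f).app z) := by
      intro z y
      obtain ⟨w0, hw0⟩ := cokernel_π_app_surjective f z y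
      obtain ⟨x, hx⟩ := hpW z w0
      refine ⟨x, ?_⟩
      rw [comp_app_elem, hx, hw0]
    have hcex : ∀ z, Function.Exact (ψ.app z) ((pW ≫ cokernel.π f).app z) := by
      intro z x
      rw [comp_app_elem]
      rw [cokernel_π_app_zero_iff f z (pW.app z x)]
      constructor
      · rintro ⟨v, hv⟩
        obtain ⟨x', hx'⟩ := hpV z v
        obtain ⟨c, hcψ, hcπ⟩ := hP2 z x x' (by rw [hx', hv])
        exact ⟨c, hcψ⟩
      · rintro ⟨c, rfl⟩
        refine ⟨(π' ≫ pV).app z c, ?_⟩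
        exact (congr_app_elem hE5 z c).symm
    have hsum1 : ∀ t : ι0V ⊕ ι1W, supNorm (Sum.elim g0V g1W t) ≤ max m n := by
      rintro (j | j)
      · exact hn0V j
      · exact hn1W j
    exact ⟨DS k (Sum.elim g0V g1W), DS k g0W, ψ, pW ≫ cokernel.π f,
      DS_isDirectSum _ _ (fun t => hsum1 t), DS_isDirectSum _ _ (fun t => hn0W t),
      hcsurj, hcex⟩
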